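/- There is a bijection between the set of ordered free multilabelled increasing trees with label set {1,...,m} and the set of ordered increasing trees with m vertices labelled {1,...,m} in which every vertex of out-degree 1 is coloured either black or white. -/

import Mathlib

/-- An ordered free multilabelled increasing tree with label set `{0,…,m-1}`
(`Fin m`), encoded canonically: `block l` is the minimum label of the block
(node) containing `l`; the nodes are the fixed points of `block`; `parent`
gives the parent node of each non-root node (the root is the node `0`);
`rank` gives the left-to-right position of each non-root node among the
children of its parent. -/
def OrderedFreeMultilabelledIncreasingTree (m : ℕ) [NeZero m] : Type :=
  { t : (Fin m → Fin m) × (Fin m → Fin m) × (Fin m → ℕ) //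
    (∀ l, t.1 (t.1 l) = t.1 l) ∧
    (∀ l, t.1 l ≤ l) ∧
    t.2.1 0 = 0 ∧ t.2.2 0 = 0 ∧
    (∀ l, t.1 l ≠ l → t.2.1 l = l ∧ t.2.2 l = 0) ∧
    (∀ v, t.1 v = v → v ≠ 0 →
      t.1 (t.2.1 v) = t.2.1 v ∧
      (∀ l, t.1 l = t.2.1 v → l < v)) ∧
    (∀ v, t.1 v = v → v ≠ 0 →
      t.2.2 v <
        Set.ncard {w : Fin m | t.1 w = w ∧ w ≠ 0 ∧ t.2.1 w = t.2.1 v}) ∧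
    (∀ v w, t.1 v = v → t.1 w = w → v ≠ 0 → w ≠ 0 →
      t.2.1 v = t.2.1 w → t.2.2 v = t.2.2 w → v = w) }

/-- An ordered increasing tree with `m` vertices labelled `0,…,m-1`
(root `0`, labels increase towards the leaves, so `parent v < v`), together
with a left-to-right rank of each non-root vertex among its siblings, and a
colouring of the vertices by `Bool` which is forced to be `false` (white)
except possibly at vertices of out-degree `1`. -/
def OrderedIncreasingTreeBicolored (m : ℕ) [NeZero m] : Type :=
  { t : (Fin m → Fin m) × (Fin m → ℕ) × (Fin m → Bool) //
    t.1 0 = 0 ∧ t.2.1 0 = 0 ∧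
    (∀ v, v ≠ 0 → t.1 v < v) ∧
    (∀ v, v ≠ 0 →
      t.2.1 v < Set.ncard {w : Fin m | w ≠ 0 ∧ t.1 w = t.1 v}) ∧
    (∀ v w, v ≠ 0 → w ≠ 0 → t.1 v = t.1 w → t.2.1 v = t.2.1 w → v = w) ∧
    (∀ v, Set.ncard {w : Fin m | w ≠ 0 ∧ t.1 w = v} ≠ 1 → t.2.2 v = false) }


set_option linter.unusedSectionVars false
set_option linter.unusedVariables false
set_option maxHeartbeats 1000000

namespace FMB
variable {m : ℕ} [NeZero m]

/-! ### Finset max/min helpers -/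

def blkMax (b : Fin m → Fin m) (n : Fin m) : Fin m :=
  WithBot.unbotD n ((Finset.univ.filter fun u => b u = n).max)

def blkPred (b : Fin m → Fin m) (l : Fin m) : Fin m :=
  WithBot.unbotD l ((Finset.univ.filter fun u => b u = b l ∧ u < l).max)

def blkSucc (b : Fin m → Fin m) (l : Fin m) : Fin m :=
  WithTop.untopD l ((Finset.univ.filter fun u => b u = b l ∧ l < u).min)

lemma max_unbot'_mem {s : Finset (Fin m)} (h : s.Nonempty) (d : Fin m) :
    WithBot.unbotD d s.max ∈ s := by
  rw [← Finset.coe_max' h, WithBot.unbotD_coe]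
  exact Finset.max'_mem s h

lemma le_max_unbot' {s : Finset (Fin m)} {x : Fin m} (hx : x ∈ s) (d : Fin m) :
    x ≤ WithBot.unbotD d s.max := by
  rw [← Finset.coe_max' ⟨x, hx⟩, WithBot.unbotD_coe]
  exact Finset.le_max' s x hx

lemma min_untop'_mem {s : Finset (Fin m)} (h : s.Nonempty) (d : Fin m) :
    WithTop.untopD d s.min ∈ s := by
  rw [← Finset.coe_min' h, WithTop.untopD_coe]
  exact Finset.min'_mem s h

lemma min_untop'_le {s : Finset (Fin m)} {x : Fin m} (hx : x ∈ s) (d : Fin m) :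
    WithTop.untopD d s.min ≤ x := by
  rw [← Finset.coe_min' ⟨x, hx⟩, WithTop.untopD_coe]
  exact Finset.min'_le s x hx

lemma blkMax_mem {b : Fin m → Fin m} {n : Fin m} (hn : b n = n) :
    b (blkMax b n) = n := by
  unfold blkMax
  have hne : (Finset.univ.filter fun u => b u = n).Nonempty :=
    ⟨n, Finset.mem_filter.2 ⟨Finset.mem_univ _, hn⟩⟩
  exact (Finset.mem_filter.1 (max_unbot'_mem hne n)).2

lemma le_blkMax {b : Fin m → Fin m} {n u : Fin m} (hu : b u = n) :
    u ≤ blkMax b n := by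
  unfold blkMax
  refine le_max_unbot' ?_ n
  exact Finset.mem_filter.2 ⟨Finset.mem_univ _, hu⟩

lemma blkPred_mem {b : Fin m → Fin m} {l : Fin m} (h : b l ≠ l) (hle : b l ≤ l)
    (hbb : b (b l) = b l) :
    b (blkPred b l) = b l ∧ blkPred b l < l := by
  unfold blkPred
  have hne : (Finset.univ.filter fun u => b u = b l ∧ u < l).Nonempty :=
    ⟨b l, Finset.mem_filter.2 ⟨Finset.mem_univ _, hbb, lt_of_le_of_ne hle h⟩⟩
  exact (Finset.mem_filter.1 (max_unbot'_mem hne l)).2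

lemma le_blkPred {b : Fin m → Fin m} {l u : Fin m} (hu : b u = b l) (hul : u < l) :
    u ≤ blkPred b l := by
  unfold blkPred
  refine le_max_unbot' ?_ l
  exact Finset.mem_filter.2 ⟨Finset.mem_univ _, hu, hul⟩

lemma blkSucc_mem {b : Fin m → Fin m} {l u : Fin m} (hu : b u = b l) (hlu : l < u) :
    b (blkSucc b l) = b l ∧ l < blkSucc b l := by
  unfold blkSucc
  have hne : (Finset.univ.filter fun u => b u = b l ∧ l < u).Nonempty :=
    ⟨u, Finset.mem_filter.2 ⟨Finset.mem_univ _, hu, hlu⟩⟩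
  exact (Finset.mem_filter.1 (min_untop'_mem hne l)).2

lemma blkSucc_le {b : Fin m → Fin m} {l u : Fin m} (hu : b u = b l) (hlu : l < u) :
    blkSucc b l ≤ u := by
  unfold blkSucc
  refine min_untop'_le ?_ l
  exact Finset.mem_filter.2 ⟨Finset.mem_univ _, hu, hlu⟩

/-! ### blockOf -/

def blockOf (p : Fin m → Fin m) (c : Fin m → Bool)
    (hp : ∀ v : Fin m, v ≠ 0 → p v < v) (l : Fin m) : Fin m :=
  if h : l ≠ 0 ∧ c (p l) = true then blockOf p c hp (p l) else l
termination_by l.val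
decreasing_by exact hp l h.1

lemma blockOf_eq (p : Fin m → Fin m) (c : Fin m → Bool)
    (hp : ∀ v : Fin m, v ≠ 0 → p v < v) (l : Fin m) :
    blockOf p c hp l =
      if l ≠ 0 ∧ c (p l) = true then blockOf p c hp (p l) else l := by
  rw [blockOf]
  split <;> simp_all

lemma blockOf_fix (p : Fin m → Fin m) (c : Fin m → Bool)
    (hp : ∀ v : Fin m, v ≠ 0 → p v < v) (l : Fin m) :
    blockOf p c hp (blockOf p c hp l) = blockOf p c hp l := by
  by_cases h : l ≠ 0 ∧ c (p l) = true
  · rw [blockOf_eq p c hp l, if_pos h]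
    exact blockOf_fix p c hp (p l)
  · have hl : blockOf p c hp l = l := by rw [blockOf_eq, if_neg h]
    rw [hl]
    exact hl
termination_by l.val
decreasing_by exact hp l h.1

lemma blockOf_le (p : Fin m → Fin m) (c : Fin m → Bool)
    (hp : ∀ v : Fin m, v ≠ 0 → p v < v) (l : Fin m) :
    blockOf p c hp l ≤ l := by
  by_cases h : l ≠ 0 ∧ c (p l) = true
  · rw [blockOf_eq p c hp l, if_pos h]
    exact le_trans (blockOf_le p c hp (p l)) (le_of_lt (hp l h.1))
  · rw [blockOf_eq p c hp l, if_neg h]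
termination_by l.val
decreasing_by exact hp l h.1

section Chain

variable {p : Fin m → Fin m} {c : Fin m → Bool}
  {hp : ∀ v : Fin m, v ≠ 0 → p v < v}
include hp

lemma p_le (h0 : p 0 = 0) (v : Fin m) : p v ≤ v := by
  by_cases hv : v = 0
  · subst hv; exact le_of_eq h0
  · exact le_of_lt (hp v hv)

lemma iter_le (h0 : p 0 = 0) (k : ℕ) (v : Fin m) : p^[k] v ≤ v := by
  induction k with
  | zero => simp
  | succ k ih =>
    rw [Function.iterate_succ_apply']
    exact le_trans (p_le (hp := hp) h0 _) ih

lemma blockOf_step {l : Fin m} (hl : l ≠ 0) (hcl : c (p l) = true) :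
    blockOf p c hp l = blockOf p c hp (p l) := by
  rw [blockOf_eq p c hp l, if_pos ⟨hl, hcl⟩]

lemma blockOf_stop {l : Fin m} (h : ¬(l ≠ 0 ∧ c (p l) = true)) :
    blockOf p c hp l = l := by
  rw [blockOf_eq p c hp l, if_neg h]

lemma blockOf_ne {l : Fin m} (h : blockOf p c hp l ≠ l) :
    l ≠ 0 ∧ c (p l) = true ∧ blockOf p c hp (p l) = blockOf p c hp l := by
  by_cases hh : l ≠ 0 ∧ c (p l) = true
  · exact ⟨hh.1, hh.2, (blockOf_step hh.1 hh.2).symm⟩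
  · exact absurd (blockOf_stop hh) h

lemma chain (h0 : p 0 = 0)
    (hc : ∀ x : Fin m, c x = true → ∀ w w' : Fin m, w ≠ 0 → w' ≠ 0 →
      p w = x → p w' = x → w = w')
    {u w : Fin m} (hb : blockOf p c hp w = blockOf p c hp u) (hlt : u < w) :
    ∃ k, 0 < k ∧ p^[k] w = u := by
  have hwB : blockOf p c hp w ≠ w := by
    intro h
    have h2 : w ≤ u := by
      calc w = blockOf p c hp u := by rw [← hb, h]
        _ ≤ u := blockOf_le p c hp u
    exact absurd hlt (not_lt.2 h2)
  obtain ⟨hw0, hcw, hstep⟩ := blockOf_ne hwB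
  rcases lt_trichotomy (p w) u with h1 | h1 | h1
  · exfalso
    have hu0 : u ≠ 0 := by
      intro h; subst h; exact absurd h1 (by simp)
    have hbu : blockOf p c hp u = blockOf p c hp (p w) := by
      rw [hstep, hb]
    obtain ⟨j, hj, hjp⟩ := chain h0 hc hbu h1
    have hex : ∃ j, 0 < j ∧ p^[j] u = p w := ⟨j, hj, hjp⟩
    obtain ⟨hJ0, hJp⟩ := Nat.find_spec hex
    set J := Nat.find hex with hJdef
    have hpx : p (p^[J-1] u) = p w := by
      rw [← Function.iterate_succ_apply' p (J-1) u]
      simp only [Nat.succ_eq_add_one]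
      have hh : J - 1 + 1 = J := by omega
      rw [hh]; exact hJp
    have hxne : p^[J-1] u ≠ p w := by
      intro hxe
      rcases Nat.lt_or_ge 1 J with hJ2 | hJ2
      · exact Nat.find_min hex (by omega : J - 1 < J) ⟨by omega, hxe⟩
      · have hJ1 : J = 1 := by omega
        rw [hJ1] at hxe
        simp at hxe
        exact absurd (hxe ▸ h1) (lt_irrefl _)
    have hx0 : p^[J-1] u ≠ 0 := by
      intro h
      apply hxne
      rw [h]
      rw [h, h0] at hpx
      rw [← hpx]
    have hwx : w = p^[J-1] u := hc (p w) hcw w _ hw0 hx0 rfl hpx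
    have hJ2 : 2 ≤ J := by
      rcases Nat.lt_or_ge 1 J with h2 | h2
      · omega
      · exfalso
        have hJ1 : J = 1 := by omega
        rw [hJ1] at hwx
        simp at hwx
        exact absurd (hwx ▸ hlt) (lt_irrefl _)
    have hle : p^[J-1] u ≤ p u := by
      have hh : p^[J-1] u = p^[J-2] (p u) := by
        rw [← Function.iterate_succ_apply p (J-2) u]
        congr 1
        omega
      rw [hh]
      exact iter_le (hp := hp) h0 _ _
    have hfin : w < u := lt_of_le_of_lt (hwx ▸ hle) (hp u hu0)
    exact absurd hlt (not_lt.2 (le_of_lt hfin))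
  · exact ⟨1, one_pos, by simpa using h1⟩
  · obtain ⟨k, hk, hkk⟩ := chain h0 hc (hstep.trans hb) h1
    exact ⟨k + 1, by omega, by rw [Function.iterate_succ_apply]; exact hkk⟩
termination_by w.val
decreasing_by
  · exact hlt
  · exact hp w hw0

lemma le_iter_parent (h0 : p 0 = 0) {u w : Fin m} {k : ℕ} (hk : 0 < k)
    (hkk : p^[k] w = u) : u ≤ p w := by
  have hh : p^[k] w = p^[k-1] (p w) := by
    rw [← Function.iterate_succ_apply p (k-1) w]
    congr 1
    omega
  rw [← hkk, hh]
  exact iter_le (hp := hp) h0 _ _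

lemma black_of_lt (h0 : p 0 = 0)
    (hc : ∀ x : Fin m, c x = true → ∀ w w' : Fin m, w ≠ 0 → w' ≠ 0 →
      p w = x → p w' = x → w = w')
    {u w : Fin m} (hb : blockOf p c hp u = blockOf p c hp w) (hlt : u < w) :
    c u = true := by
  have hwB : blockOf p c hp w ≠ w := by
    intro h
    have h2 : w ≤ u := by
      calc w = blockOf p c hp u := by rw [hb, h]
        _ ≤ u := blockOf_le p c hp u
    exact absurd hlt (not_lt.2 h2)
  obtain ⟨hw0, hcw, hstep⟩ := blockOf_ne hwB
  rcases lt_trichotomy (p w) u with h1 | h1 | h1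
  · exfalso
    obtain ⟨k, hk, hkk⟩ := chain h0 hc hb.symm hlt
    exact absurd h1 (not_lt.2 (le_iter_parent (hp := hp) h0 hk hkk))
  · rw [← h1]; exact hcw
  · exact black_of_lt h0 hc (hb.trans hstep.symm) h1
termination_by w.val
decreasing_by exact hp w hw0

lemma le_of_white (h0 : p 0 = 0)
    (hc : ∀ x : Fin m, c x = true → ∀ w w' : Fin m, w ≠ 0 → w' ≠ 0 →
      p w = x → p w' = x → w = w')
    {u x : Fin m} (hx : c x = false)
    (hu : blockOf p c hp u = blockOf p c hp x) : u ≤ x := by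
  by_contra h
  push_neg at h
  have hh := black_of_lt (hp := hp) h0 hc hu.symm h
  simp [hx] at hh

lemma le_parent_of_block (h0 : p 0 = 0)
    (hc : ∀ x : Fin m, c x = true → ∀ w w' : Fin m, w ≠ 0 → w' ≠ 0 →
      p w = x → p w' = x → w = w')
    {u l : Fin m} (hu : blockOf p c hp u = blockOf p c hp l) (hul : u < l) :
    u ≤ p l := by
  obtain ⟨k, hk, hkk⟩ := chain h0 hc hu.symm hul
  exact le_iter_parent (hp := hp) h0 hk hkk

end Chain
end FMB
namespace FMB
variable {m : ℕ} [NeZero m]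

/-! ### Forward map components -/

def fwdP (b p : Fin m → Fin m) (l : Fin m) : Fin m :=
  if l = 0 then 0 else if b l = l then blkMax b (p l) else blkPred b l

def fwdC (b : Fin m → Fin m) (l : Fin m) : Bool :=
  decide (∃ u, b u = b l ∧ l < u)

section Fwd
variable {b p : Fin m → Fin m} {r : Fin m → ℕ}

lemma nonnode_ne_zero (hb2 : ∀ l, b l ≤ l) {l : Fin m} (h : b l ≠ l) : l ≠ 0 := by
  intro h0
  subst h0
  exact h (le_antisymm (hb2 0) (Fin.zero_le _))

lemma fwdP_nonnode (hb2 : ∀ l, b l ≤ l) {l : Fin m} (h : b l ≠ l) :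
    fwdP b p l = blkPred b l := by
  unfold fwdP
  rw [if_neg (nonnode_ne_zero hb2 h), if_neg h]

lemma fwdP_node {v : Fin m} (hv : b v = v) (h0 : v ≠ 0) :
    fwdP b p v = blkMax b (p v) := by
  unfold fwdP
  rw [if_neg h0, if_pos hv]

lemma fwdP_zero : fwdP b p 0 = 0 := by
  unfold fwdP
  rw [if_pos rfl]

lemma nonnode_props (hb1 : ∀ l, b (b l) = b l) (hb2 : ∀ l, b l ≤ l)
    {l : Fin m} (h : b l ≠ l) :
    b (fwdP b p l) = b l ∧ fwdP b p l < l := by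
  rw [fwdP_nonnode hb2 h]
  exact blkPred_mem h (hb2 l) (hb1 l)

lemma node_props
    (hnd : ∀ v, b v = v → v ≠ 0 → b (p v) = p v ∧ ∀ l, b l = p v → l < v)
    {v : Fin m} (hv : b v = v) (h0 : v ≠ 0) :
    b (fwdP b p v) = p v ∧ fwdP b p v < v ∧
      ∀ u, b u = b (fwdP b p v) → u ≤ fwdP b p v := by
  rw [fwdP_node hv h0]
  have h1 := blkMax_mem (hnd v hv h0).1
  refine ⟨h1, (hnd v hv h0).2 _ h1, ?_⟩
  intro u hu
  rw [h1] at hu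
  exact le_blkMax hu

lemma fwdP_lt (hb1 : ∀ l, b (b l) = b l) (hb2 : ∀ l, b l ≤ l)
    (hnd : ∀ v, b v = v → v ≠ 0 → b (p v) = p v ∧ ∀ l, b l = p v → l < v)
    {v : Fin m} (h0 : v ≠ 0) : fwdP b p v < v := by
  by_cases hv : b v = v
  · exact (node_props hnd hv h0).2.1
  · exact (nonnode_props hb1 hb2 hv).2

lemma mixed_absurd (hb1 : ∀ l, b (b l) = b l) (hb2 : ∀ l, b l ≤ l)
    (hnd : ∀ v, b v = v → v ≠ 0 → b (p v) = p v ∧ ∀ l, b l = p v → l < v)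
    {v w : Fin m} (hv : b v = v) (h0 : v ≠ 0) (hw : b w ≠ w)
    (h : fwdP b p v = fwdP b p w) : False := by
  have h3 := nonnode_props (p := p) hb1 hb2 hw
  have h4 := (node_props hnd hv h0).2.2 w (by rw [h]; exact h3.1.symm ▸ rfl)
  rw [h] at h4
  exact absurd h3.2 (not_lt.2 h4)

lemma cond_rank (hb1 : ∀ l, b (b l) = b l) (hb2 : ∀ l, b l ≤ l)
    (hnn : ∀ l, b l ≠ l → p l = l ∧ r l = 0)
    (hnd : ∀ v, b v = v → v ≠ 0 → b (p v) = p v ∧ ∀ l, b l = p v → l < v)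
    (hrk : ∀ v, b v = v → v ≠ 0 →
      r v < Set.ncard {w : Fin m | b w = w ∧ w ≠ 0 ∧ p w = p v})
    {v : Fin m} (h0 : v ≠ 0) :
    r v < Set.ncard {w : Fin m | w ≠ 0 ∧ fwdP b p w = fwdP b p v} := by
  by_cases hv : b v = v
  · have hset : {w : Fin m | w ≠ 0 ∧ fwdP b p w = fwdP b p v} =
        {w : Fin m | b w = w ∧ w ≠ 0 ∧ p w = p v} := by
      ext w
      simp only [Set.mem_setOf_eq]
      constructor
      · rintro ⟨hw0, hpw⟩
        by_cases hw : b w = w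
        · refine ⟨hw, hw0, ?_⟩
          have h1 := (node_props (p := p) hnd hw hw0).1
          have h2 := (node_props (p := p) hnd hv h0).1
          rw [hpw, h2] at h1
          exact h1.symm
        · exact absurd hpw.symm (fun h => mixed_absurd hb1 hb2 hnd hv h0 hw h)
      · rintro ⟨hw, hw0, hpw⟩
        refine ⟨hw0, ?_⟩
        rw [fwdP_node hw hw0, fwdP_node hv h0, hpw]
    rw [hset]
    exact hrk v hv h0
  · rw [(hnn v hv).2]
    exact (Set.ncard_pos (Set.toFinite _)).2 ⟨v, h0, rfl⟩

lemma cond_inj (hb1 : ∀ l, b (b l) = b l) (hb2 : ∀ l, b l ≤ l)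
    (hnd : ∀ v, b v = v → v ≠ 0 → b (p v) = p v ∧ ∀ l, b l = p v → l < v)
    (hinj : ∀ v w, b v = v → b w = w → v ≠ 0 → w ≠ 0 →
      p v = p w → r v = r w → v = w)
    {v w : Fin m} (h0 : v ≠ 0) (hw0 : w ≠ 0)
    (hpe : fwdP b p v = fwdP b p w) (hre : r v = r w) : v = w := by
  by_cases hv : b v = v
  · by_cases hw : b w = w
    · have h1 := (node_props (p := p) hnd hv h0).1
      have h2 := (node_props (p := p) hnd hw hw0).1
      exact hinj v w hv hw h0 hw0 (by rw [← h1, hpe, h2]) hre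
    · exact absurd hpe (fun h => absurd (mixed_absurd hb1 hb2 hnd hv h0 hw h) id)
  · by_cases hw : b w = w
    · exact absurd hpe.symm (fun h => absurd (mixed_absurd hb1 hb2 hnd hw hw0 hv h) id)
    · have h3 := nonnode_props (p := p) hb1 hb2 hv
      have h4 := nonnode_props (p := p) hb1 hb2 hw
      have hbvw : b v = b w := by rw [← h3.1, hpe, h4.1]
      rcases lt_trichotomy v w with h | h | h
      · exfalso
        have h5 : v ≤ blkPred b w := le_blkPred hbvw h
        rw [← fwdP_nonnode hb2 hw, ← hpe] at h5
        exact absurd h3.2 (not_lt.2 h5)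
      · exact h
      · exfalso
        have h5 : w ≤ blkPred b v := le_blkPred hbvw.symm h
        rw [← fwdP_nonnode hb2 hv, hpe] at h5
        exact absurd h4.2 (not_lt.2 h5)

lemma cond_color (hb1 : ∀ l, b (b l) = b l) (hb2 : ∀ l, b l ≤ l)
    (hnd : ∀ v, b v = v → v ≠ 0 → b (p v) = p v ∧ ∀ l, b l = p v → l < v)
    {x : Fin m}
    (hx : Set.ncard {w : Fin m | w ≠ 0 ∧ fwdP b p w = x} ≠ 1) :
    fwdC b x = false := by
  by_contra hcx
  apply hx
  have hct : fwdC b x = true := by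
    cases hcc : fwdC b x
    · exact absurd hcc hcx
    · rfl
  have hex : ∃ u, b u = b x ∧ x < u := by
    simpa [fwdC, decide_eq_true_eq] using hct
  obtain ⟨u, hu, hxu⟩ := hex
  obtain ⟨hbs, hxs⟩ := blkSucc_mem hu hxu
  have hsn : b (blkSucc b x) ≠ blkSucc b x :=
    ne_of_lt (lt_of_le_of_lt (hbs ▸ hb2 x) hxs)
  have hfs : fwdP b p (blkSucc b x) = x := by
    rw [fwdP_nonnode hb2 hsn]
    refine le_antisymm ?_ (le_blkPred (by rw [hbs]) hxs)
    by_contra hgt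
    push_neg at hgt
    have h5 := blkPred_mem hsn (hb2 _) (hb1 _)
    have h6 : blkSucc b x ≤ blkPred b (blkSucc b x) :=
      blkSucc_le (by rw [h5.1, hbs]) hgt
    exact absurd h5.2 (not_lt.2 h6)
  have hset : {w : Fin m | w ≠ 0 ∧ fwdP b p w = x} = {blkSucc b x} := by
    ext w
    simp only [Set.mem_setOf_eq, Set.mem_singleton_iff]
    constructor
    · rintro ⟨hw0, hpw⟩
      by_cases hwn : b w = w
      · exfalso
        have h7 := node_props (p := p) hnd hwn hw0
        have h8 : u ≤ x := by
          have h9 := h7.2.2 u (by rw [hpw]; exact hu)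
          rw [hpw] at h9
          exact h9
        exact absurd hxu (not_lt.2 h8)
      · have h7 := nonnode_props (p := p) hb1 hb2 hwn
        have hbw : b w = b x := by rw [← hpw, h7.1]
        have h8 : blkSucc b x ≤ w := blkSucc_le hbw (hpw ▸ h7.2)
        rcases eq_or_lt_of_le h8 with he | hl
        · exact he.symm
        · exfalso
          have h9 : blkSucc b x ≤ blkPred b w := le_blkPred (by rw [hbs, hbw]) hl
          rw [← fwdP_nonnode hb2 hwn, hpw] at h9
          exact absurd hxs (not_lt.2 h9)
    · rintro rfl
      have hsnz : blkSucc b x ≠ 0 :=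
        ne_of_gt (lt_of_le_of_lt (Fin.zero_le _) hxs)
      exact ⟨hsnz, hfs⟩
  rw [hset, Set.ncard_singleton]

end Fwd
end FMB

namespace FMB
variable {m : ℕ} [NeZero m]

/-! ### Inverse map components -/

def gP (p : Fin m → Fin m) (c : Fin m → Bool)
    (hp : ∀ v : Fin m, v ≠ 0 → p v < v) (l : Fin m) : Fin m :=
  if blockOf p c hp l ≠ l then l else if l = 0 then 0 else blockOf p c hp (p l)

section Gwd
variable {p : Fin m → Fin m} {r : Fin m → ℕ} {c : Fin m → Bool}
  {hp : ∀ v : Fin m, v ≠ 0 → p v < v}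

lemma blockOf_zero : blockOf p c hp 0 = 0 :=
  blockOf_stop (by simp)

lemma gP_zero : gP p c hp 0 = 0 := by
  unfold gP
  rw [if_neg (by simp [blockOf_zero]), if_pos rfl]

lemma gP_nonnode {l : Fin m} (h : blockOf p c hp l ≠ l) : gP p c hp l = l := by
  unfold gP
  rw [if_pos h]

lemma gP_node {v : Fin m} (hv : blockOf p c hp v = v) (h0 : v ≠ 0) :
    gP p c hp v = blockOf p c hp (p v) := by
  unfold gP
  rw [if_neg (by simp [hv]), if_neg h0]

lemma white_parent_of_node {v : Fin m} (hv : blockOf p c hp v = v) (h0 : v ≠ 0) :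
    c (p v) = false := by
  by_contra h
  have ht : c (p v) = true := by
    cases hcc : c (p v)
    · exact absurd hcc h
    · rfl
  have hstep := blockOf_step (hp := hp) h0 ht
  have : blockOf p c hp v < v :=
    lt_of_le_of_lt (hstep ▸ blockOf_le p c hp (p v)) (hp v h0)
  exact absurd hv (ne_of_lt this)

lemma node_of_white {w : Fin m} (hw : c (p w) = false) : blockOf p c hp w = w :=
  blockOf_stop (by simp [hw])

/-- a black vertex has at most one child -/
lemma hc_of_h6
    (h6 : ∀ v, Set.ncard {w : Fin m | w ≠ 0 ∧ p w = v} ≠ 1 → c v = false) :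
    ∀ x : Fin m, c x = true → ∀ w w' : Fin m, w ≠ 0 → w' ≠ 0 →
      p w = x → p w' = x → w = w' := by
  intro x hx w w' hw hw' hpw hpw'
  have hn1 : Set.ncard {w : Fin m | w ≠ 0 ∧ p w = x} = 1 := by
    by_contra hne
    rw [h6 x hne] at hx
    exact Bool.false_ne_true hx
  obtain ⟨a, ha⟩ := Set.ncard_eq_one.1 hn1
  have h1 : w ∈ ({a} : Set (Fin m)) := ha ▸ (⟨hw, hpw⟩ : w ∈ {w : Fin m | w ≠ 0 ∧ p w = x})
  have h2 : w' ∈ ({a} : Set (Fin m)) := ha ▸ (⟨hw', hpw'⟩ : w' ∈ {w : Fin m | w ≠ 0 ∧ p w = x})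
  rw [Set.mem_singleton_iff] at h1 h2
  rw [h1, h2]

lemma ncard_one_of_black
    (h6 : ∀ v, Set.ncard {w : Fin m | w ≠ 0 ∧ p w = v} ≠ 1 → c v = false)
    {x : Fin m} (hx : c x = true) :
    Set.ncard {w : Fin m | w ≠ 0 ∧ p w = x} = 1 := by
  by_contra hne
  rw [h6 x hne] at hx
  exact Bool.false_ne_true hx

/-- the set of non-root nodes with a given `gP`-parent equals the set of
non-root children of `p v`, for a node `v ≠ 0`. -/
lemma gchild_set (h1 : p 0 = 0)
    (h6 : ∀ v, Set.ncard {w : Fin m | w ≠ 0 ∧ p w = v} ≠ 1 → c v = false)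
    {v : Fin m} (hv : blockOf p c hp v = v) (h0 : v ≠ 0) :
    {w : Fin m | blockOf p c hp w = w ∧ w ≠ 0 ∧ gP p c hp w = gP p c hp v} =
      {w : Fin m | w ≠ 0 ∧ p w = p v} := by
  have hc := hc_of_h6 (c := c) h6
  have hcv : c (p v) = false := white_parent_of_node hv h0
  ext w
  simp only [Set.mem_setOf_eq]
  constructor
  · rintro ⟨hbw, hw0, hge⟩
    rw [gP_node hbw hw0, gP_node hv h0] at hge
    have hcw : c (p w) = false := white_parent_of_node hbw hw0
    have hle1 : p w ≤ p v := le_of_white (hp := hp) h1 hc hcv hge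
    have hle2 : p v ≤ p w := le_of_white (hp := hp) h1 hc hcw hge.symm
    exact ⟨hw0, le_antisymm hle1 hle2⟩
  · rintro ⟨hw0, hpw⟩
    have hcw : c (p w) = false := by rw [hpw]; exact hcv
    have hbw : blockOf p c hp w = w := node_of_white hcw
    refine ⟨hbw, hw0, ?_⟩
    rw [gP_node hbw hw0, gP_node hv h0, hpw]

end Gwd
end FMB

namespace FMB
variable {m : ℕ} [NeZero m]

section RT1
variable {b p : Fin m → Fin m}

lemma blockOf_fwd (hb1 : ∀ l, b (b l) = b l) (hb2 : ∀ l, b l ≤ l)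
    (hnd : ∀ v, b v = v → v ≠ 0 → b (p v) = p v ∧ ∀ l, b l = p v → l < v)
    (hp' : ∀ v : Fin m, v ≠ 0 → fwdP b p v < v) (l : Fin m) :
    blockOf (fwdP b p) (fwdC b) hp' l = b l := by
  by_cases h0 : l = 0
  · subst h0
    rw [blockOf_zero]
    exact (le_antisymm (hb2 0) (Fin.zero_le _)).symm
  by_cases hl : b l = l
  · have hM := node_props (p := p) hnd hl h0
    have hcf : fwdC b (fwdP b p l) = false := by
      simp only [fwdC, decide_eq_false_iff_not, not_exists]
      rintro u ⟨hu, hlu⟩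
      exact absurd hlu (not_lt.2 (hM.2.2 u hu))
    rw [blockOf_stop (by simp [hcf]), hl]
  · have hPr := nonnode_props (p := p) hb1 hb2 hl
    have hct : fwdC b (fwdP b p l) = true := by
      simp only [fwdC, decide_eq_true_eq]
      exact ⟨l, hPr.1.symm, hPr.2⟩
    rw [blockOf_step h0 hct]
    rw [blockOf_fwd hb1 hb2 hnd hp' (fwdP b p l), hPr.1]
termination_by l.val
decreasing_by exact hp' l h0

lemma gP_fwd (hb1 : ∀ l, b (b l) = b l) (hb2 : ∀ l, b l ≤ l)
    (hp0 : p 0 = 0)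
    (hnn : ∀ l, b l ≠ l → p l = l)
    (hnd : ∀ v, b v = v → v ≠ 0 → b (p v) = p v ∧ ∀ l, b l = p v → l < v)
    (hp' : ∀ v : Fin m, v ≠ 0 → fwdP b p v < v) (l : Fin m) :
    gP (fwdP b p) (fwdC b) hp' l = p l := by
  by_cases h0 : l = 0
  · subst h0
    rw [gP_zero, hp0]
  by_cases hl : b l = l
  · have hbl : blockOf (fwdP b p) (fwdC b) hp' l = l := by
      rw [blockOf_fwd hb1 hb2 hnd hp' l]; exact hl
    rw [gP_node hbl h0, blockOf_fwd hb1 hb2 hnd hp' _,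
      (node_props (p := p) hnd hl h0).1]
  · have hbl : blockOf (fwdP b p) (fwdC b) hp' l ≠ l := by
      rw [blockOf_fwd hb1 hb2 hnd hp' l]; exact hl
    rw [gP_nonnode hbl, hnn l hl]

end RT1

section RT2
variable {p : Fin m → Fin m} {c : Fin m → Bool}
  {hp : ∀ v : Fin m, v ≠ 0 → p v < v}

lemma fwdP_g (h1 : p 0 = 0)
    (h6 : ∀ v, Set.ncard {w : Fin m | w ≠ 0 ∧ p w = v} ≠ 1 → c v = false)
    (l : Fin m) :
    fwdP (blockOf p c hp) (gP p c hp) l = p l := by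
  have hc := hc_of_h6 (c := c) h6
  by_cases h0 : l = 0
  · subst h0
    rw [fwdP_zero, h1]
  by_cases hl : blockOf p c hp l = l
  · have hcpl : c (p l) = false := white_parent_of_node hl h0
    rw [fwdP_node hl h0, gP_node hl h0]
    refine le_antisymm ?_ (le_blkMax rfl)
    have h2 := blkMax_mem (b := blockOf p c hp) (n := blockOf p c hp (p l))
      (blockOf_fix p c hp (p l))
    exact le_of_white (hp := hp) h1 hc hcpl h2
  · obtain ⟨hl0, hcpl, hstep⟩ := blockOf_ne hl
    rw [fwdP_nonnode (blockOf_le p c hp) hl]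
    refine le_antisymm ?_ (le_blkPred hstep (hp l h0))
    have h2 := blkPred_mem (b := blockOf p c hp) hl (blockOf_le p c hp l)
      (blockOf_fix p c hp l)
    exact le_parent_of_block (hp := hp) h1 hc h2.1 h2.2

lemma fwdC_g (h1 : p 0 = 0)
    (h6 : ∀ v, Set.ncard {w : Fin m | w ≠ 0 ∧ p w = v} ≠ 1 → c v = false)
    (x : Fin m) :
    fwdC (blockOf p c hp) x = c x := by
  have hc := hc_of_h6 (c := c) h6
  cases hcx : c x
  · simp only [fwdC, decide_eq_false_iff_not, not_exists]
    rintro u ⟨hu, hxu⟩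
    have := black_of_lt (hp := hp) h1 hc hu.symm hxu
    rw [hcx] at this
    exact Bool.false_ne_true this
  · simp only [fwdC, decide_eq_true_eq]
    obtain ⟨a, ha⟩ := Set.ncard_eq_one.1 (ncard_one_of_black h6 hcx)
    have haa : a ∈ ({a} : Set (Fin m)) := rfl
    rw [← ha] at haa
    simp only [Set.mem_setOf_eq] at haa
    obtain ⟨ha0, hpa⟩ := haa
    refine ⟨a, ?_, ?_⟩
    · rw [blockOf_step ha0 (by rw [hpa]; exact hcx), hpa]
    · rw [← hpa]
      exact hp a ha0

end RT2
end FMB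

namespace FMB
variable {m : ℕ} [NeZero m]

def Fmap (t : OrderedFreeMultilabelledIncreasingTree m) :
    OrderedIncreasingTreeBicolored m :=
  ⟨(fwdP t.1.1 t.1.2.1, t.1.2.2, fwdC t.1.1), by
    obtain ⟨⟨b, p, r⟩, hb1, hb2, hp0, hr0, hnn, hnd, hrk, hinj⟩ := t
    dsimp only at hb1 hb2 hp0 hr0 hnn hnd hrk hinj ⊢
    refine ⟨fwdP_zero, hr0, ?_, ?_, ?_, ?_⟩
    · intro v h0
      exact fwdP_lt hb1 hb2 hnd h0
    · intro v h0
      exact cond_rank hb1 hb2 hnn hnd hrk h0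
    · intro v w h0 hw0 hpe hre
      exact cond_inj hb1 hb2 hnd hinj h0 hw0 hpe hre
    · intro v hv
      exact cond_color hb1 hb2 hnd hv⟩

def Gmap (s : OrderedIncreasingTreeBicolored m) :
    OrderedFreeMultilabelledIncreasingTree m :=
  ⟨(blockOf s.1.1 s.1.2.2 s.2.2.2.1, gP s.1.1 s.1.2.2 s.2.2.2.1, s.1.2.1), by
    obtain ⟨⟨p, r, c⟩, h1, h2, h3, h4, h5, h6⟩ := s
    dsimp only at h1 h2 h3 h4 h5 h6 ⊢
    have hc := hc_of_h6 (c := c) (p := p) h6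
    refine ⟨blockOf_fix p c h3, blockOf_le p c h3, gP_zero, h2, ?_, ?_, ?_, ?_⟩
    · intro l hl
      obtain ⟨hl0, hcpl, _⟩ := blockOf_ne hl
      refine ⟨gP_nonnode hl, ?_⟩
      have hlt := h4 l hl0
      rw [ncard_one_of_black h6 hcpl] at hlt
      omega
    · intro v hv h0
      rw [gP_node hv h0]
      refine ⟨blockOf_fix p c h3 (p v), ?_⟩
      intro l hl
      have hcv : c (p v) = false := white_parent_of_node hv h0
      exact lt_of_le_of_lt (le_of_white (hp := h3) h1 hc hcv hl) (h3 v h0)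
    · intro v hv h0
      rw [gchild_set h1 h6 hv h0]
      exact h4 v h0
    · intro v w hv hw h0 hw0 hge hre
      have hmem : w ∈ {w : Fin m | blockOf p c h3 w = w ∧ w ≠ 0 ∧
          gP p c h3 w = gP p c h3 v} := ⟨hw, hw0, hge.symm⟩
      rw [gchild_set h1 h6 hv h0] at hmem
      exact h5 v w h0 hw0 hmem.2.symm hre⟩

noncomputable def theEquiv :
    OrderedFreeMultilabelledIncreasingTree m ≃ OrderedIncreasingTreeBicolored m where
  toFun := Fmap
  invFun := Gmap
  left_inv := by
    intro t
    apply Subtype.ext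
    obtain ⟨hb1, hb2, hp0, hr0, hnn, hnd, hrk, hinj⟩ := t.2
    show (blockOf (fwdP t.1.1 t.1.2.1) (fwdC t.1.1) ((Fmap t).2.2.2.1),
          gP (fwdP t.1.1 t.1.2.1) (fwdC t.1.1) ((Fmap t).2.2.2.1),
          t.1.2.2) = t.1
    rw [funext (blockOf_fwd hb1 hb2 hnd ((Fmap t).2.2.2.1)),
      funext (gP_fwd hb1 hb2 hp0 (fun l hl => (hnn l hl).1) hnd ((Fmap t).2.2.2.1))]
  right_inv := by
    intro s
    apply Subtype.ext
    obtain ⟨h1, h2, h3, h4, h5, h6⟩ := s.2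
    show (fwdP (blockOf s.1.1 s.1.2.2 s.2.2.2.1) (gP s.1.1 s.1.2.2 s.2.2.2.1),
          s.1.2.1,
          fwdC (blockOf s.1.1 s.1.2.2 s.2.2.2.1)) = s.1
    rw [funext (fwdP_g (hp := s.2.2.2.1) h1 h6),
      funext (fwdC_g (hp := s.2.2.2.1) h1 h6)]

end FMB

/-- There is a bijection between ordered free multilabelled increasing trees
with label set `{1,…,m}` and ordered increasing trees of size `m` in which
every vertex of out-degree `1` is coloured black or white. -/
theorem free_multilabelled_bijection (m : ℕ) [NeZero m] (hm : 1 ≤ m) :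
    Nonempty (OrderedFreeMultilabelledIncreasingTree m ≃
      OrderedIncreasingTreeBicolored m) :=
  ⟨FMB.theEquiv⟩
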